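/- A star graph consisting of one f-vertex joined to n+1 p-vertices of distinct colors 1, ..., n+1 is minimal with respect to weak coverings: any weak covering from it to a connected colored graph is an isomorphism. -/

import Mathlib

/-- A weak covering of colored simple graphs: a color-preserving graph homomorphism
such that every edge at the image of a vertex lifts to an edge at that vertex. -/
def SWeakCovering {A B C : Type} (G : SimpleGraph A) (cA : A → C)
    (H : SimpleGraph B) (cB : B → C) (f : A → B) : Prop :=
  (∀ a, cB (f a) = cA a) ∧
  (∀ ⦃a a'⦄, G.Adj a a' → H.Adj (f a) (f a')) ∧
  (∀ a b, H.Adj (f a) b → ∃ a', G.Adj a a' ∧ f a' = b)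

/-- The star graph: one central f-vertex (`none`) joined to `n+1` leaves (`some i`),
one of each p-color `i ∈ {1, …, n+1}`; the coloring is the identity on
`Option (Fin (n+1))` (with `none` the f-color). -/
def starGraph (n : ℕ) : SimpleGraph (Option (Fin (n + 1))) where
  Adj a b := (a = none ∧ b ≠ none) ∨ (b = none ∧ a ≠ none)
  symm := by tauto
  loopless := ⟨by rintro a (⟨h1, h2⟩ | ⟨h1, h2⟩) <;> exact h2 h1⟩

/-- the star (one f-vertex joined to `n+1` p-vertices of distinct colors)
is minimal with respect to weak coverings: any weak covering from it to a connected
colored graph is an isomorphism. -/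
theorem star_minimal {n : ℕ} {B : Type} (H : SimpleGraph B) (c : B → Option (Fin (n + 1)))
    (hconn : H.Connected) (g : Option (Fin (n + 1)) → B)
    (hg : SWeakCovering (starGraph n) id H c g) :
    Function.Bijective g ∧ ∀ v w, (starGraph n).Adj v w ↔ H.Adj (g v) (g w) := by
  obtain ⟨hc, hfwd, hlift⟩ := hg
  have hinj : Function.Injective g := by
    intro a a' h
    have : id a = id a' := by rw [← hc, ← hc, h]
    simpa using this
  have hsurj : Function.Surjective g := by
    intro b
    obtain ⟨w⟩ := hconn.preconnected (g none) b
    have key : ∀ {u v : B} (w : H.Walk u v), (∃ a, g a = u) → ∃ a, g a = v := by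
      intro u v w
      induction w with
      | nil => exact fun h => h
      | cons hadj _ ih =>
        rintro ⟨a, rfl⟩
        obtain ⟨a', _, ha'⟩ := hlift a _ hadj
        exact ih ⟨a', ha'⟩
    exact key w ⟨none, rfl⟩
  refine ⟨⟨hinj, hsurj⟩, fun v w => ⟨fun h => hfwd h, fun h => ?_⟩⟩
  match v with
  | none =>
    refine Or.inl ⟨rfl, fun hw => ?_⟩
    subst hw; exact H.loopless.irrefl _ h
  | some i =>
    obtain ⟨a', ha', heq⟩ := hlift (some i) _ h
    have : a' = none := by
      rcases ha' with ⟨h1, _⟩ | ⟨h1, _⟩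
      · exact absurd h1 (by simp)
      · exact h1
    subst this
    have : w = none := (hinj heq).symm
    subst this
    exact Or.inr ⟨rfl, by simp⟩
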